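/- arXiv:2407.21260 — 5 statements merged into one kernel-verified Lean document; each statement's English description precedes it below -/
import Mathlib

section
/- If a sketch ψ is Bellman closed, then it is mixture-consistent. That is, if there exists an operator 𝒯_ψ such that ψ(𝒯η̄) = 𝒯_ψ ψ(η̄) for all collections of return distributions η̄, where 𝒯 is the distributional Bellman operator (translation by reward followed by mixing over next-state transition probabilities), then the value of ψ on any mixture ν·η₁ + (1−ν)·η₂ is a function of ψ(η₁), ψ(η₂), and ν alone. -/
open MeasureTheory
open scoped ENNReal BigOperators

/-- A sketch `ψ : 𝒫(ℝ) → ℝ^N` is mixture-consistent if the sketch of any mixture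
`ν·η₁ + (1−ν)·η₂` of probability distributions is a function of `ψ(η₁)`, `ψ(η₂)`, `ν`. -/
def MixtureConsistent {N : ℕ} (ψ : Measure ℝ → Fin N → ℝ) : Prop :=
  ∃ h : (Fin N → ℝ) → (Fin N → ℝ) → ℝ → Fin N → ℝ,
    ∀ η₁ η₂ : Measure ℝ, IsProbabilityMeasure η₁ → IsProbabilityMeasure η₂ →
      ∀ ν : ℝ, 0 ≤ ν → ν ≤ 1 →
        ψ (ENNReal.ofReal ν • η₁ + ENNReal.ofReal (1 - ν) • η₂) = h (ψ η₁) (ψ η₂) ν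

/-- A sketch `ψ` is Bellman closed if for every (finite-state) MDP data — transition
kernel `P` and reward `r` — there is an operator `G = 𝒯_ψ` with
`ψ(𝒯 ηb) = G (ψ ∘ ηb)` for every collection of return distributions `ηb`, where
`𝒯 ηb (s) = (𝓑_{r s})_# ∑_{s'} P s s' • ηb s'` is the distributional Bellman operator. -/
def BellmanClosed {N : ℕ} (ψ : Measure ℝ → Fin N → ℝ) : Prop :=
  ∀ (S : Type) [Fintype S] (P : S → S → ℝ≥0∞), (∀ s, ∑ s', P s s' = 1) →
    ∀ r : S → ℝ,
      ∃ G : (S → Fin N → ℝ) → (S → Fin N → ℝ),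
        ∀ ηb : S → Measure ℝ, (∀ s, IsProbabilityMeasure (ηb s)) →
          (fun s => ψ (Measure.map (fun x => r s + x) (∑ s', P s s' • ηb s')))
            = G (fun s => ψ (ηb s))

/-- If a sketch is Bellman closed then it is mixture-consistent. -/
theorem bellmanClosed_mixtureConsistent {N : ℕ} (ψ : Measure ℝ → Fin N → ℝ)
    (hBC : BellmanClosed ψ) : MixtureConsistent ψ := by
  classical
  -- transition kernel on three states
  set Pk : ℝ → Fin 3 → Fin 3 → ℝ≥0∞ := fun ν s s' =>
    if s = 0 then (if s' = 1 then ENNReal.ofReal ν else if s' = 2 then ENNReal.ofReal (1 - ν) else 0)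
    else (if s' = s then 1 else 0) with hPk
  have hsum : ∀ ν : ℝ, 0 ≤ ν → ν ≤ 1 → ∀ s, ∑ s', Pk ν s s' = 1 := by
    intro ν h0 h1 s
    fin_cases s <;>
      simp [hPk, Fin.sum_univ_three, ← ENNReal.ofReal_add h0 (by linarith : (0:ℝ) ≤ 1 - ν)]
  have key : ∀ ν : ℝ, 0 ≤ ν → ν ≤ 1 →
      ∃ G : (Fin 3 → Fin N → ℝ) → (Fin 3 → Fin N → ℝ),
        ∀ ηb : Fin 3 → Measure ℝ, (∀ s, IsProbabilityMeasure (ηb s)) →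
          (fun s => ψ (Measure.map (fun x => (0:ℝ) + x) (∑ s', Pk ν s s' • ηb s')))
            = G (fun s => ψ (ηb s)) :=
    fun ν h0 h1 => hBC (Fin 3) (Pk ν) (hsum ν h0 h1) (fun _ => 0)
  refine ⟨fun a b ν => if hν : 0 ≤ ν ∧ ν ≤ 1 then
      (key ν hν.1 hν.2).choose (fun s => if s = 2 then b else a) 0 else 0, ?_⟩
  intro η₁ η₂ h₁ h₂ ν h0 h1
  have hν : 0 ≤ ν ∧ ν ≤ 1 := ⟨h0, h1⟩
  set ηb : Fin 3 → Measure ℝ := fun s => if s = 2 then η₂ else η₁ with hηb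
  have hprob : ∀ s, IsProbabilityMeasure (ηb s) := by
    intro s; by_cases h : s = 2 <;> simp [hηb, h, h₁, h₂]
  have spec := (key ν h0 h1).choose_spec ηb hprob
  have heval := congrFun spec 0
  have hmix : (∑ s', Pk ν 0 s' • ηb s')
      = ENNReal.ofReal ν • η₁ + ENNReal.ofReal (1 - ν) • η₂ := by
    simp [hPk, hηb, Fin.sum_univ_three]
  have hmap : Measure.map (fun x => (0:ℝ) + x)
      (ENNReal.ofReal ν • η₁ + ENNReal.ofReal (1 - ν) • η₂)
      = ENNReal.ofReal ν • η₁ + ENNReal.ofReal (1 - ν) • η₂ := by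
    simp
  rw [hmix, hmap] at heval
  rw [heval]
  have : (fun s => ψ (ηb s)) = fun s : Fin 3 => if s = 2 then ψ η₂ else ψ η₁ := by
    funext s; by_cases h : s = 2 <;> simp [hηb, h]
  rw [this]
  simp [hν]
end

section
/- The maximum functional is not Bellman unbiased: for k ≥ 1 samples, there is no function φ : ℝ^k → ℝ such that for every finitely supported probability distribution P on ℝ, E_{X₁,…,X_k i.i.d.∼P}[φ(X₁,…,X_k)] = max(support(P)). (In particular, the maximum of a finite-support distribution admits no unbiased estimator from i.i.d. samples.) -/
open MeasureTheory

/-- The (topological) support of a measure on ℝ. -/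
def msupport (μ : Measure ℝ) : Set ℝ :=
  {x | ∀ U : Set ℝ, IsOpen U → x ∈ U → μ U ≠ 0}

noncomputable section AuxMaxEst
open Set

/-- Auxiliary embedding of `Bool` into `ℝ`. -/
def bfun : Bool → ℝ := fun t => if t then 1 else 0

/-- The Bernoulli-type measure on `Bool` with weight `p` on `false`. -/
def nuB (p : ℝ) : Measure Bool :=
  ENNReal.ofReal p • Measure.dirac false + ENNReal.ofReal (1 - p) • Measure.dirac true

/-- The Bernoulli-type measure `p·δ₀ + (1-p)·δ₁` on `ℝ`. -/
def etaM (p : ℝ) : Measure ℝ :=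
  ENNReal.ofReal p • Measure.dirac 0 + ENNReal.ofReal (1 - p) • Measure.dirac 1

lemma measurable_bfun : Measurable bfun := measurable_of_countable _

lemma nuB_prob (p : ℝ) (hp : p ∈ Icc (0:ℝ) 1) : IsProbabilityMeasure (nuB p) := by
  constructor
  simp only [nuB, Measure.add_apply, Measure.smul_apply, smul_eq_mul,
    measure_univ, mul_one]
  rw [← ENNReal.ofReal_add hp.1 (by linarith [hp.2])]
  norm_num

lemma etaM_prob (p : ℝ) (hp : p ∈ Icc (0:ℝ) 1) : IsProbabilityMeasure (etaM p) := by
  constructor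
  simp only [etaM, Measure.add_apply, Measure.smul_apply, smul_eq_mul,
    measure_univ, mul_one]
  rw [← ENNReal.ofReal_add hp.1 (by linarith [hp.2])]
  norm_num

lemma etaM_eq_map (p : ℝ) : etaM p = (nuB p).map bfun := by
  rw [nuB, Measure.map_add _ _ measurable_bfun, Measure.map_smul, Measure.map_smul,
    Measure.map_dirac' measurable_bfun, Measure.map_dirac' measurable_bfun]
  simp [etaM, bfun]

lemma nuB_false (p : ℝ) : nuB p {false} = ENNReal.ofReal p := by
  simp [nuB, Measure.dirac_apply]

lemma nuB_true (p : ℝ) : nuB p {true} = ENNReal.ofReal (1 - p) := by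
  simp [nuB, Measure.dirac_apply]

/-- The expectation of `φ` under `k` i.i.d. samples from `etaM p` is an explicit
finite sum (a polynomial in `p`). -/
lemma integral_pi_etaM (k : ℕ) (p : ℝ) (hp : p ∈ Icc (0:ℝ) 1)
    (φ : (Fin k → ℝ) → ℝ) (hφ : Measurable φ) :
    ∫ x, φ x ∂(Measure.pi fun _ : Fin k => etaM p)
      = ∑ ω : Fin k → Bool, (∏ i, if ω i then 1 - p else p) * φ (fun i => bfun (ω i)) := by
  haveI := nuB_prob p hp
  haveI := etaM_prob p hp
  have hF : Measurable (fun (ω : Fin k → Bool) i => bfun (ω i)) :=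
    measurable_pi_lambda _ fun i => measurable_bfun.comp (measurable_pi_apply i)
  have hpi : Measure.pi (fun _ : Fin k => etaM p)
      = (Measure.pi fun _ : Fin k => nuB p).map (fun ω i => bfun (ω i)) := by
    refine Measure.pi_eq fun s hs => ?_
    rw [Measure.map_apply hF (MeasurableSet.univ_pi hs)]
    have hpre : (fun (ω : Fin k → Bool) i => bfun (ω i)) ⁻¹' (Set.pi univ s)
        = Set.pi univ fun i => bfun ⁻¹' s i := by
      ext ω; simp [Set.mem_pi]
    rw [hpre, Measure.pi_pi]
    refine Finset.prod_congr rfl fun i _ => ?_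
    rw [etaM_eq_map, Measure.map_apply measurable_bfun (hs i)]
  rw [hpi, integral_map hF.aemeasurable hφ.aestronglyMeasurable,
      integral_fintype Integrable.of_finite]
  refine Finset.sum_congr rfl fun ω _ => ?_
  rw [smul_eq_mul]
  congr 1
  rw [measureReal_def, ← Set.univ_pi_singleton ω, Measure.pi_pi, ENNReal.toReal_prod]
  refine Finset.prod_congr rfl fun i _ => ?_
  cases h : ω i <;> simp [h, nuB_false p, nuB_true p, ENNReal.toReal_ofReal,
    hp.1, sub_nonneg.2 hp.2]

lemma msupport_dirac : msupport (Measure.dirac (0:ℝ)) = {0} := by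
  ext x
  constructor
  · intro h
    by_contra hx
    have hU : IsOpen ({(0:ℝ)}ᶜ) := isOpen_compl_singleton
    have := h _ hU (by simpa using hx)
    rw [Measure.dirac_apply' _ hU.measurableSet] at this
    simp at this
  · rintro rfl U hU hxU
    rw [Measure.dirac_apply' _ hU.measurableSet]
    simp [Set.indicator_of_mem hxU]

lemma msupport_etaM (p : ℝ) (hp : p ∈ Ioo (0:ℝ) 1) : msupport (etaM p) = {0, 1} := by
  have h0 : ENNReal.ofReal p ≠ 0 := by simp [ENNReal.ofReal_eq_zero]; linarith [hp.1]
  have h1 : ENNReal.ofReal (1 - p) ≠ 0 := by simp [ENNReal.ofReal_eq_zero]; linarith [hp.2]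
  ext x
  constructor
  · intro h
    by_contra hx
    simp only [Set.mem_insert_iff, Set.mem_singleton_iff, not_or] at hx
    have hU : IsOpen ({(0:ℝ),1}ᶜ) := ((Set.finite_singleton (1:ℝ)).insert 0).isClosed.isOpen_compl
    have := h _ hU (by simp [hx.1, hx.2])
    apply this
    simp only [etaM, Measure.add_apply, Measure.smul_apply, smul_eq_mul]
    rw [Measure.dirac_apply' _ hU.measurableSet, Measure.dirac_apply' _ hU.measurableSet]
    simp
  · intro hx U hU hxU
    simp only [etaM, Measure.add_apply, Measure.smul_apply, smul_eq_mul]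
    rw [Measure.dirac_apply' _ hU.measurableSet, Measure.dirac_apply' _ hU.measurableSet]
    rcases hx with rfl | hx
    · simp [Set.indicator_of_mem hxU, h0]
    · rw [Set.mem_singleton_iff] at hx
      subst hx
      simp [Set.indicator_of_mem hxU, h1]

end AuxMaxEst

/-- The maximum functional is not Bellman unbiased: for any `k ≥ 1` there is no
(measurable) function `φ : ℝ^k → ℝ` whose expectation under `k` i.i.d. samples from
every finitely supported probability distribution equals the maximum of its support. -/
theorem max_not_unbiasedly_estimable (k : ℕ) (hk : 1 ≤ k) :
    ¬ ∃ φ : (Fin k → ℝ) → ℝ, Measurable φ ∧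
      ∀ η : Measure ℝ, IsProbabilityMeasure η → (msupport η).Finite →
        (∫ x : Fin k → ℝ, φ x ∂(Measure.pi fun _ : Fin k => η)) = sSup (msupport η) := by
  rintro ⟨φ, hφm, hφ⟩
  set g : ℝ → ℝ := fun p =>
    ∑ ω : Fin k → Bool, (∏ i, if ω i then 1 - p else p) * φ (fun i => bfun (ω i)) with hg
  have hgcont : Continuous g := by
    apply continuous_finset_sum
    intro ω _
    apply Continuous.mul _ continuous_const
    apply continuous_finset_prod
    intro i _
    cases h : ω i
    · simp only [h, Bool.false_eq_true, if_false]; exact continuous_id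
    · simp only [h, if_true]; exact continuous_const.sub continuous_id
  have hint : ∀ p ∈ Set.Icc (0:ℝ) 1,
      (∫ x, φ x ∂(Measure.pi fun _ : Fin k => etaM p)) = g p :=
    fun p hp => integral_pi_etaM k p hp φ hφm
  have h1 : ∀ p ∈ Set.Ioo (0:ℝ) 1, g p = 1 := by
    intro p hp
    have hp' : p ∈ Set.Icc (0:ℝ) 1 := ⟨hp.1.le, hp.2.le⟩
    have hfin : (msupport (etaM p)).Finite := by
      rw [msupport_etaM p hp]
      exact (Set.finite_singleton (1:ℝ)).insert 0
    have := hφ (etaM p) (etaM_prob p hp') hfin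
    rw [hint p hp', msupport_etaM p hp] at this
    rw [this, csSup_pair]
    exact sup_eq_right.2 zero_le_one
  have hg1 : g 1 = 1 := by
    have hEq : Set.EqOn g (fun _ => (1:ℝ)) (closure (Set.Ioo (0:ℝ) 1)) :=
      Set.EqOn.closure h1 hgcont continuous_const
    have hc : (1:ℝ) ∈ closure (Set.Ioo (0:ℝ) 1) := by
      rw [closure_Ioo (zero_ne_one)]
      exact ⟨zero_le_one, le_refl 1⟩
    exact hEq hc
  have heta1 : etaM 1 = Measure.dirac 0 := by
    simp [etaM]
  have hfin0 : (msupport (Measure.dirac (0:ℝ))).Finite := by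
    rw [msupport_dirac]; exact Set.finite_singleton 0
  have hd := hφ (Measure.dirac 0) (Measure.dirac.isProbabilityMeasure) hfin0
  rw [msupport_dirac, csSup_singleton] at hd
  have h2 := hint 1 ⟨zero_le_one, le_refl 1⟩
  rw [heta1] at h2
  rw [h2] at hd
  linarith [hg1, hd]
end

section
/- If L disjoint subsequences Z₁,…,Z_L of observed points each certify ε-dependence of a point x with respect to a pair f, g satisfying |f⁽¹⁾(x) − g⁽¹⁾(x)| > ε, then ‖f − g‖²_Z ≥ L·ε² where Z = Z₁ ∪ ⋯ ∪ Z_L. Consequently, if additionally ‖f − f̂‖²_Z ≤ β and ‖g − f̂‖²_Z ≤ β for some f̂, then L ≤ 4β/ε². -/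
open scoped BigOperators

/-- Squared data norm of a vector-valued function over a finite set of points. -/
def fnormSq {X : Type} {N : ℕ} (g : X → Fin (N + 1) → ℝ) (Z : Finset X) : ℝ :=
  ∑ x ∈ Z, ∑ n, (g x n) ^ 2

/-- `x` is `ε`-dependent on the set `Z` w.r.t. `F`. -/
def EpsDepF {X : Type} {N : ℕ} (F : Set (X → Fin (N + 1) → ℝ)) (ε : ℝ) (x : X)
    (Z : Finset X) : Prop :=
  ∀ f ∈ F, ∀ g ∈ F, fnormSq (f - g) Z ≤ ε ^ 2 → |f x 0 - g x 0| ≤ ε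

lemma fnormSq_mono {X : Type} [DecidableEq X] {N : ℕ} (h : X → Fin (N + 1) → ℝ)
    {Z Z' : Finset X} (hZ : Z ⊆ Z') : fnormSq h Z ≤ fnormSq h Z' := by
  apply Finset.sum_le_sum_of_subset_of_nonneg hZ
  intro i _ _
  positivity

/-- If `L` pairwise disjoint subsequences each certify `ε`-dependence of `x` while the
pair `f, g` has first-coordinate gap exceeding `ε` at `x`, then
`‖f − g‖²_Z ≥ L·ε²` on the union `Z`; consequently, if moreover
`‖f − f̂‖²_Z ≤ β` and `‖g − f̂‖²_Z ≤ β`, then `L ≤ 4β/ε²`. -/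
theorem disjoint_dependence_norm_lower_bound
    {X : Type} [DecidableEq X] {N L : ℕ}
    (F : Set (X → Fin (N + 1) → ℝ)) (ε β : ℝ) (hε : 0 < ε) (hβ : 0 < β)
    (B : Fin L → Finset X) (hdisj : ∀ i j, i ≠ j → Disjoint (B i) (B j))
    (x : X) (f g fhat : X → Fin (N + 1) → ℝ) (hf : f ∈ F) (hg : g ∈ F)
    (hdep : ∀ i, EpsDepF F ε x (B i)) (hgap : ε < |f x 0 - g x 0|) :
    (L : ℝ) * ε ^ 2 ≤ fnormSq (f - g) (Finset.univ.biUnion B) ∧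
    (fnormSq (f - fhat) (Finset.univ.biUnion B) ≤ β →
      fnormSq (g - fhat) (Finset.univ.biUnion B) ≤ β →
      (L : ℝ) ≤ 4 * β / ε ^ 2) := by
  have hsplit : fnormSq (f - g) (Finset.univ.biUnion B) =
      ∑ i : Fin L, fnormSq (f - g) (B i) := by
    unfold fnormSq
    rw [Finset.sum_biUnion]
    intro i _ j _ hij
    exact hdisj i j hij
  have hi : ∀ i : Fin L, ε ^ 2 ≤ fnormSq (f - g) (B i) := by
    intro i
    by_contra h
    push_neg at h
    exact absurd (hdep i f hf g hg h.le) (not_le.mpr hgap)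
  have hlow : (L : ℝ) * ε ^ 2 ≤ fnormSq (f - g) (Finset.univ.biUnion B) := by
    rw [hsplit]
    calc (L : ℝ) * ε ^ 2 = ∑ _i : Fin L, ε ^ 2 := by
          rw [Finset.sum_const, Finset.card_univ, Fintype.card_fin, nsmul_eq_mul]
      _ ≤ ∑ i : Fin L, fnormSq (f - g) (B i) := Finset.sum_le_sum fun i _ => hi i
  refine ⟨hlow, fun h1 h2 => ?_⟩
  set Z := Finset.univ.biUnion B
  have hup : fnormSq (f - g) Z ≤ 2 * fnormSq (f - fhat) Z + 2 * fnormSq (g - fhat) Z := by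
    unfold fnormSq
    rw [Finset.mul_sum, Finset.mul_sum, ← Finset.sum_add_distrib]
    apply Finset.sum_le_sum
    intro y _
    rw [Finset.mul_sum, Finset.mul_sum, ← Finset.sum_add_distrib]
    apply Finset.sum_le_sum
    intro n _
    simp only [Pi.sub_apply]
    nlinarith [sq_nonneg (f y n + g y n - 2 * fhat y n)]
  have : (L : ℝ) * ε ^ 2 ≤ 4 * β := by nlinarith
  rw [div_eq_mul_inv, ← mul_le_mul_iff_of_pos_right (pow_pos hε 2)]
  calc (L : ℝ) * ε ^ 2 ≤ 4 * β := this
    _ = 4 * β * (ε ^ 2)⁻¹ * ε ^ 2 := by field_simp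
end

section
/- Sorted-width summation bound: let e₁ ≥ e₂ ≥ ⋯ ≥ e_T be a nonincreasing sequence in [0, H] such that for every t and every ε > 0 with e_t ≥ ε, one has t ≤ (4β/ε² + 1)·d for a fixed constant d ≥ 1 (with β > 0, H > 0). Then ∑_{t=1}^T e_t ≤ H·d + √(16·d·T·β); moreover, if the hypothesis holds in the strengthened form t ≤ (4β/(M·e_t²) + 1)·d for all M > 0 whenever e_t ≥ 1/(√M·T), then ∑_{t=1}^T e_t ≤ H·d. -/
open scoped BigOperators

private lemma sqrt_series_aux (s : ℝ) (hs : 0 ≤ s) (n : ℕ) :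
    ∑ k ∈ Finset.range n, (1:ℝ)/Real.sqrt (k+1+s) ≤ 2*(Real.sqrt (n+s) - Real.sqrt s) := by
  induction n with
  | zero => simp
  | succ n ih =>
    rw [Finset.sum_range_succ]
    have ha : (0:ℝ) ≤ (n:ℝ) + s := by positivity
    have hb : (0:ℝ) ≤ (n:ℝ) + 1 + s := by positivity
    have h2 : (1:ℝ)/Real.sqrt ((n:ℝ)+1+s) ≤ 2*(Real.sqrt ((n:ℝ)+1+s) - Real.sqrt ((n:ℝ)+s)) := by
      have hpos : 0 < Real.sqrt ((n:ℝ)+1+s) := by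
        apply Real.sqrt_pos.2; linarith
      rw [div_le_iff₀ hpos]
      have := Real.sq_sqrt ha
      have := Real.sq_sqrt hb
      have h1 : Real.sqrt ((n:ℝ)+s) ≤ Real.sqrt ((n:ℝ)+1+s) := by
        apply Real.sqrt_le_sqrt; linarith
      have := Real.sqrt_nonneg ((n:ℝ)+s)
      nlinarith
    push_cast
    linarith

set_option maxHeartbeats 1600000 in
/-- Sorted-width summation bound: for a nonincreasing sequence `e₁ ≥ ⋯ ≥ e_T` in
`[0, H]` satisfying the eluder counting bound, `∑ e_t ≤ H·d + √(16·d·T·β)`; under the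
strengthened counting bound (uniform in `M`), `∑ e_t ≤ H·d`. -/
theorem sorted_width_sum_bound
    (T : ℕ) (e : Fin T → ℝ) (H β d : ℝ) (hH : 0 < H) (hβ : 0 < β) (hd : 1 ≤ d)
    (hmono : ∀ i j : Fin T, i ≤ j → e j ≤ e i)
    (hrange : ∀ t, 0 ≤ e t ∧ e t ≤ H) :
    ((∀ (t : Fin T) (ε : ℝ), 0 < ε → ε ≤ e t →
        ((t : ℕ) : ℝ) + 1 ≤ (4 * β / ε ^ 2 + 1) * d) →
      ∑ t, e t ≤ H * d + Real.sqrt (16 * d * T * β)) ∧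
    ((∀ M : ℝ, 0 < M → ∀ t : Fin T, 1 / (Real.sqrt M * T) ≤ e t →
        ((t : ℕ) : ℝ) + 1 ≤ (4 * β / (M * (e t) ^ 2) + 1) * d) →
      ∑ t, e t ≤ H * d) := by
  have hd0 : (0:ℝ) ≤ d := by linarith
  constructor
  · -- Part 1
    intro hyp
    have hsqrt0 : 0 ≤ Real.sqrt (16 * d * T * β) := Real.sqrt_nonneg _
    -- per-term bound
    have hKey : ∀ t : Fin T, d < ((t:ℕ):ℝ) + 1 →
        e t ≤ 2 * Real.sqrt (β*d) / Real.sqrt (((t:ℕ):ℝ) + 1 - d) := by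
      intro t ht
      set u : ℝ := ((t:ℕ):ℝ) + 1 - d with hu
      clear_value u
      have hu0 : 0 < u := by simp only [hu]; linarith
      rcases eq_or_lt_of_le (hrange t).1 with h0 | he
      · rw [← h0]; positivity
      · have hb := hyp t (e t) he le_rfl
        have hq : (e t)^2 * u ≤ 4*(β*d) := by
          have h1 : ((t:ℕ):ℝ) + 1 ≤ 4*β/(e t)^2 * d + d := by nlinarith
          have h2 : u ≤ 4*β/(e t)^2*d := by simp only [hu]; linarith
          have h3 : (e t)^2 * u ≤ (e t)^2 * (4*β/(e t)^2*d) := by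
            apply mul_le_mul_of_nonneg_left h2 (by positivity)
          have h4 : (e t)^2 * (4*β/(e t)^2*d) = 4*(β*d) := by
            field_simp
          exact le_of_le_of_eq h3 h4
        rw [le_div_iff₀ (Real.sqrt_pos.2 hu0)]
        have h5 : e t * Real.sqrt u = Real.sqrt ((e t)^2 * u) := by
          rw [Real.sqrt_mul (by positivity), Real.sqrt_sq he.le]
        have h6 : Real.sqrt (4*(β*d)) = 2 * Real.sqrt (β*d) := by
          rw [show (4:ℝ)*(β*d) = 2^2*(β*d) by ring,
            Real.sqrt_mul (by positivity : (0:ℝ) ≤ 2^2),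
            Real.sqrt_sq (by norm_num : (0:ℝ) ≤ 2)]
        rw [h5, ← h6]
        exact Real.sqrt_le_sqrt hq
    -- extend e to ℕ
    set E : ℕ → ℝ := fun i => if h : i < T then e ⟨i, h⟩ else 0 with hE
    clear_value E
    have hsumE : ∑ t, e t = ∑ i ∈ Finset.range T, E i := by
      rw [← Fin.sum_univ_eq_sum_range]
      apply Finset.sum_congr rfl
      intro i _
      simp [hE, i.2]
    have hE0 : ∀ i, 0 ≤ E i := by
      intro i; simp only [hE]
      split
      · exact (hrange _).1
      · exact le_refl 0
    have hEH : ∀ i, E i ≤ H := by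
      intro i; simp only [hE]
      split
      · exact (hrange _).2
      · exact hH.le
    have hc1 : 1 ≤ ⌈d⌉₊ := Nat.one_le_ceil_iff.2 (by linarith)
    obtain ⟨c', hcc⟩ : ∃ c', ⌈d⌉₊ = c' + 1 :=
      ⟨⌈d⌉₊ - 1, (Nat.succ_pred_eq_of_pos hc1).symm⟩
    have hdc : d ≤ ((c'+1:ℕ):ℝ) := by rw [← hcc]; exact_mod_cast Nat.le_ceil d
    have hcd : ((c'+1:ℕ):ℝ) < d + 1 := by
      rw [← hcc]; exact_mod_cast Nat.ceil_lt_add_one hd0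
    by_cases hTc : c' + 1 ≤ T
    · -- main case
      set s : ℝ := ((c'+1:ℕ):ℝ) - d with hs
      clear_value s
      have hs0 : 0 ≤ s := by simp only [hs]; linarith
      have hs1 : s < 1 := by simp only [hs]; push_cast; push_cast at hcd; linarith
      have hsplit : ∑ i ∈ Finset.range T, E i =
          (∑ i ∈ Finset.range c', E i) + E c' + ∑ i ∈ Finset.Ico (c'+1) T, E i := by
        rw [Finset.range_eq_Ico, ← Finset.sum_Ico_consecutive E (Nat.zero_le (c'+1)) hTc,
          ← Finset.range_eq_Ico, Finset.sum_range_succ]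
      -- bound 1
      have hB1 : ∑ i ∈ Finset.range c', E i ≤ (c':ℝ) * H := by
        calc ∑ i ∈ Finset.range c', E i ≤ ∑ _i ∈ Finset.range c', H :=
              Finset.sum_le_sum (fun i _ => hEH i)
          _ = (c':ℝ) * H := by rw [Finset.sum_const, Finset.card_range, nsmul_eq_mul]
      -- bound 2 : boundary term
      have hc'T : c' < T := lt_of_lt_of_le (Nat.lt_succ_self c') hTc
      have hB2 : E c' ≤ (1 - s) * H + 2 * Real.sqrt (β*d) * Real.sqrt s := by
        have hEc : E c' = e ⟨c', hc'T⟩ := by simp [hE, hc'T]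
        rcases eq_or_lt_of_le hs0 with h0 | hspos
        · rw [hEc, ← h0]
          simp only [Real.sqrt_zero, mul_zero, sub_zero, one_mul, add_zero]
          exact (hrange _).2
        · have hdlt : d < ((c':ℕ):ℝ) + 1 := by
            have : ((c':ℕ):ℝ) + 1 = d + s := by
              simp only [hs]; push_cast; ring
            rw [this]; linarith
          have hk := hKey ⟨c', hc'T⟩ (by simpa using hdlt)
          have hsub : (((⟨c', hc'T⟩ : Fin T) : ℕ):ℝ) + 1 - d = s := by
            simp only [hs]; push_cast; ring
          rw [hsub] at hk
          rw [hEc]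
          have h1 : (1-s) * e ⟨c', hc'T⟩ ≤ (1-s) * H :=
            mul_le_mul_of_nonneg_left (hrange _).2 (by linarith)
          have h2 : s * e ⟨c', hc'T⟩ ≤ s * (2 * Real.sqrt (β*d) / Real.sqrt s) :=
            mul_le_mul_of_nonneg_left hk hs0
          have h3 : s * (2 * Real.sqrt (β*d) / Real.sqrt s) =
              2 * Real.sqrt (β*d) * Real.sqrt s := by
            rw [mul_div_assoc', mul_comm s, mul_div_assoc, Real.div_sqrt]
          nlinarith [h1, h2, h3]
      -- bound 3 : tail
      set n : ℕ := T - (c'+1) with hn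
      clear_value n
      have hB3 : ∑ i ∈ Finset.Ico (c'+1) T, E i ≤
          2 * Real.sqrt (β*d) * (2*(Real.sqrt ((n:ℝ)+s) - Real.sqrt s)) := by
        rw [Finset.sum_Ico_eq_sum_range]
        have hterm : ∀ k ∈ Finset.range (T - (c'+1)),
            E (c'+1+k) ≤ 2 * Real.sqrt (β*d) * ((1:ℝ)/Real.sqrt ((k:ℝ)+1+s)) := by
          intro k hk
          have hkT : c'+1+k < T := by
            rw [Finset.mem_range] at hk
            omega
          have hEc : E (c'+1+k) = e ⟨c'+1+k, hkT⟩ := by simp [hE, hkT]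
          have hdlt : d < (((c'+1+k:ℕ)):ℝ) + 1 := by
            push_cast
            push_cast at hdc
            linarith
          have hkey := hKey ⟨c'+1+k, hkT⟩ (by simpa using hdlt)
          have hsub : (((⟨c'+1+k, hkT⟩ : Fin T) : ℕ):ℝ) + 1 - d = (k:ℝ)+1+s := by
            simp only [hs]; push_cast; ring
          rw [hsub] at hkey
          rw [hEc]
          calc e ⟨c'+1+k, hkT⟩ ≤ 2 * Real.sqrt (β*d) / Real.sqrt ((k:ℝ)+1+s) := hkey
            _ = 2 * Real.sqrt (β*d) * ((1:ℝ)/Real.sqrt ((k:ℝ)+1+s)) := by ring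
        calc ∑ k ∈ Finset.range (T-(c'+1)), E (c'+1+k)
            ≤ ∑ k ∈ Finset.range (T-(c'+1)),
                2 * Real.sqrt (β*d) * ((1:ℝ)/Real.sqrt ((k:ℝ)+1+s)) :=
              Finset.sum_le_sum hterm
          _ = 2 * Real.sqrt (β*d) * ∑ k ∈ Finset.range n, (1:ℝ)/Real.sqrt ((k:ℝ)+1+s) := by
              rw [← Finset.mul_sum, hn]
          _ ≤ 2 * Real.sqrt (β*d) * (2*(Real.sqrt ((n:ℝ)+s) - Real.sqrt s)) := by
              apply mul_le_mul_of_nonneg_left (sqrt_series_aux s hs0 n) (by positivity)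
      -- combine
      have hns : (n:ℝ) + s ≤ (T:ℝ) := by
        have : (n:ℝ) = (T:ℝ) - ((c'+1:ℕ):ℝ) := by
          rw [hn]; push_cast [Nat.cast_sub hTc]; ring
        simp only [hs] at *
        push_cast at this ⊢
        linarith
      have hfinal : 4 * Real.sqrt (β*d) * Real.sqrt ((n:ℝ)+s) ≤ Real.sqrt (16*d*T*β) := by
        have h4 : (4:ℝ) = Real.sqrt 16 := by
          rw [show (16:ℝ) = 4^2 by norm_num, Real.sqrt_sq (by norm_num)]
        have hns0 : (0:ℝ) ≤ (n:ℝ) + s := by positivity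
        rw [h4, ← Real.sqrt_mul (by norm_num), ← Real.sqrt_mul (by positivity)]
        apply Real.sqrt_le_sqrt
        have hmul := mul_le_mul_of_nonneg_left hns
          (le_of_lt (by positivity : (0:ℝ) < 16*(β*d)))
        nlinarith [hmul]
      have hcs : ((c':ℕ):ℝ) + (1 - s) = d := by
        simp only [hs]; push_cast; ring
      have hsq : 0 ≤ Real.sqrt (β*d) * Real.sqrt s := by positivity
      rw [hsumE, hsplit]
      nlinarith [hB1, hB2, hB3, hfinal, hcs, hsq, hH]
    · -- T < c : every index small
      push_neg at hTc
      have hTd : (T:ℝ) ≤ d := by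
        have hTc' : T ≤ c' := by omega
        have h := (Nat.cast_le (α := ℝ)).2 hTc'
        push_cast at hcd
        linarith
      have h1 : ∑ t, e t ≤ (T:ℝ) * H := by
        calc ∑ t, e t ≤ ∑ _t : Fin T, H := Finset.sum_le_sum (fun t _ => (hrange t).2)
          _ = (T:ℝ) * H := by
              rw [Finset.sum_const, Finset.card_univ, Fintype.card_fin, nsmul_eq_mul]
      have h2 : (T:ℝ) * H ≤ H * d := by nlinarith
      linarith
  · -- Part 2
    intro hyp
    -- every t with d < t+1 has e t = 0
    have hzero : ∀ t : Fin T, d < ((t:ℕ):ℝ) + 1 → e t = 0 := by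
      intro t ht
      by_contra hne
      have he : 0 < e t := lt_of_le_of_ne (hrange t).1 (Ne.symm hne)
      have hT : (0:ℝ) < T := by
        exact_mod_cast lt_of_le_of_lt (Nat.zero_le _) t.2
      set δ : ℝ := ((t:ℕ):ℝ) + 1 - d with hδdef
      clear_value δ
      have hδ : 0 < δ := by simp [hδdef]; linarith
      set M : ℝ := max (4*β*d/(δ*(e t)^2)) (1/((e t)^2*(T:ℝ)^2)) + 1 with hMdef
      clear_value M
      have hM1 : 4*β*d/(δ*(e t)^2) ≤ M - 1 := by
        simp only [hMdef, add_sub_cancel_right]; exact le_max_left _ _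
      have hM2 : 1/((e t)^2*(T:ℝ)^2) ≤ M := by
        have := le_max_right (4*β*d/(δ*(e t)^2)) (1/((e t)^2*(T:ℝ)^2))
        simp only [hMdef]; linarith
      have hM0 : 0 < M :=
        lt_of_lt_of_le (div_pos one_pos (mul_pos (pow_pos he 2) (pow_pos hT 2))) hM2
      have hsqrtM : 1/(e t * T) ≤ Real.sqrt M := by
        rw [show (1:ℝ)/((e t)^2*(T:ℝ)^2) = (1/(e t * T))^2 by ring] at hM2
        exact Real.le_sqrt' (by positivity) |>.2 hM2
      have harg : 1 / (Real.sqrt M * T) ≤ e t := by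
        have hs0 : 0 < Real.sqrt M := Real.sqrt_pos.2 hM0
        rw [div_le_iff₀ (by positivity)]
        have h2 : 1/(e t * T) * T ≤ Real.sqrt M * T :=
          mul_le_mul_of_nonneg_right hsqrtM (le_of_lt hT)
        have h3 : 1/(e t * T) * T = 1 / e t := by
          field_simp
        rw [h3] at h2
        calc (1:ℝ) = e t * (1 / e t) := by
              rw [one_div, mul_inv_cancel₀ (ne_of_gt he)]
          _ ≤ e t * (Real.sqrt M * T) := mul_le_mul_of_nonneg_left h2 (le_of_lt he)
      have hbound := hyp M hM0 t harg
      have key : δ * (M * (e t)^2) ≤ 4*β*d := by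
        have hpos : 0 < M * (e t)^2 := by positivity
        have hδle : δ ≤ 4*β/(M*(e t)^2)*d := by
          have : ((t:ℕ):ℝ) + 1 ≤ 4*β/(M*(e t)^2)*d + d := by nlinarith [hbound]
          simp only [hδdef]; linarith
        calc δ * (M*(e t)^2) ≤ (4*β/(M*(e t)^2)*d) * (M*(e t)^2) :=
              mul_le_mul_of_nonneg_right hδle (le_of_lt hpos)
          _ = 4*β*d := by field_simp
      have : 4*β*d/(δ*(e t)^2) * (δ*(e t)^2) ≤ (M-1) * (δ*(e t)^2) :=
        mul_le_mul_of_nonneg_right hM1 (by positivity)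
      rw [div_mul_cancel₀ _ (by positivity)] at this
      nlinarith [sq_nonneg (e t), hδ]
    -- now sum
    set m : ℕ := ⌊d⌋₊ with hm
    clear_value m
    have hstep : ∀ t : Fin T, e t ≤ if ((t:ℕ) < m) then H else 0 := by
      intro t
      by_cases h : (t:ℕ) < m
      · simp [h, (hrange t).2]
      · simp only [h, if_false]
        have hlt : d < ((t:ℕ):ℝ) + 1 := by
          have hmt : m ≤ (t:ℕ) := Nat.le_of_not_lt h
          rw [hm] at hmt
          have hcast : ((⌊d⌋₊:ℕ):ℝ) ≤ ((t:ℕ):ℝ) := by exact_mod_cast hmt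
          linarith [Nat.lt_floor_add_one d]
        exact le_of_eq (hzero t hlt)
    calc ∑ t, e t ≤ ∑ t : Fin T, (if ((t:ℕ) < m) then H else 0) :=
          Finset.sum_le_sum (fun t _ => hstep t)
      _ = ∑ t ∈ Finset.range T, (if (t < m) then H else 0) :=
          Fin.sum_univ_eq_sum_range (fun t => if (t < m) then H else 0) T
      _ ≤ ∑ t ∈ Finset.range (T + m), (if (t < m) then H else 0) := by
          apply Finset.sum_le_sum_of_subset_of_nonneg
          · exact Finset.range_subset_range.2 (Nat.le_add_right _ _)
          · intro i _ _; positivity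
      _ = ∑ t ∈ Finset.range m, (if (t < m) then H else 0) := by
          symm
          apply Finset.sum_subset (Finset.range_subset_range.2 (Nat.le_add_left _ _))
          intro x _ hx
          simp only [Finset.mem_range, not_lt] at hx
          simp [Nat.not_lt.2 hx]
      _ = m * H := by
          rw [Finset.sum_ite_of_true, Finset.sum_const, Finset.card_range, nsmul_eq_mul]
          intro i hi; exact Finset.mem_range.1 hi
      _ ≤ d * H := by
          rw [hm]
          exact mul_le_mul_of_nonneg_right
            (by exact_mod_cast Nat.floor_le hd0) (le_of_lt hH)
      _ = H * d := mul_comm _ _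
end

section
/- Regret decomposition for optimistic value iteration: suppose for all episodes k and steps h, the optimistic value functions satisfy Q*ₕ(s,a) ≤ Qᵏₕ(s,a) pointwise, Qᵏₕ(sᵏₕ, aᵏₕ) − (rₕ(sᵏₕ,aᵏₕ) + E_{s'∼Pₕ(·|sᵏₕ,aᵏₕ)}[Vᵏₕ₊₁(s')]) ≤ 2·bᵏₕ(sᵏₕ,aᵏₕ), and the executed policy satisfies the Bellman equation for Q^{πᵏ}. Then the regret ∑ₖ (V*₁(sᵏ₁) − V^{πᵏ}₁(sᵏ₁)) is at most ∑ₖ∑ₕ (2·bᵏₕ(sᵏₕ,aᵏₕ) + ξᵏₕ), where ξᵏₕ = E_{s'∼Pₕ(·|sᵏₕ,aᵏₕ)}[(Vᵏₕ₊₁ − V^{πᵏ}ₕ₊₁)(s')] − (Vᵏₕ₊₁(sᵏₕ₊₁) − V^{πᵏ}ₕ₊₁(sᵏₕ₊₁)) is a martingale difference with respect to the trajectory filtration. -/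
open scoped BigOperators

/-- Regret decomposition for optimistic value iteration in a finite episodic MDP:
if the optimistic `Q`-estimates dominate `Q*`, are greedy-consistent, and their Bellman
residuals at the visited pairs are bounded by twice the bonuses, then the total regret
is bounded by the summed bonuses plus the martingale-difference terms `ξ`. -/
theorem regret_decomposition
    (S A : Type) [Fintype S]
    (H K : ℕ)
    (P : ℕ → S → A → S → ℝ) (r : ℕ → S → A → ℝ)
    (Qstar : ℕ → S → A → ℝ) (Vstar : ℕ → S → ℝ) (πstar : ℕ → S → A)
    (Qk Qπ : ℕ → ℕ → S → A → ℝ) (Vk Vπ : ℕ → ℕ → S → ℝ)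
    (π : ℕ → ℕ → S → A) (b : ℕ → ℕ → S → A → ℝ)
    (s : ℕ → ℕ → S) (a : ℕ → ℕ → A)
    (ξ : ℕ → ℕ → ℝ)
    -- optimism: Q* ≤ Qᵏ pointwise
    (hopt : ∀ k h (x : S) (u : A), Qstar h x u ≤ Qk k h x u)
    -- V* is attained by an optimal action
    (hVstar : ∀ h x, Vstar h x = Qstar h x (πstar h x))
    -- greedy policy and value definitions for the optimistic estimates
    (hgreedy : ∀ k h x u, Qk k h x u ≤ Qk k h x (π k h x))
    (hVk : ∀ k h x, Vk k h x = Qk k h x (π k h x))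
    (hVπ : ∀ k h x, Vπ k h x = Qπ k h x (π k h x))
    -- executed actions follow the greedy policy
    (ha : ∀ k h, a k h = π k h (s k h))
    -- Bellman equation for the executed policy πᵏ
    (hBellπ : ∀ k h x u,
      Qπ k h x u = r h x u + ∑ x' : S, P h x u x' * Vπ k (h + 1) x')
    -- bonus bound for the optimistic Bellman residual at the visited pairs
    (hbonus : ∀ k h,
      Qk k h (s k h) (a k h)
          - (r h (s k h) (a k h)
            + ∑ x' : S, P h (s k h) (a k h) x' * Vk k (h + 1) x')
        ≤ 2 * b k h (s k h) (a k h))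
    -- terminal condition
    (hterm : ∀ k x, Vk k (H + 1) x = 0 ∧ Vπ k (H + 1) x = 0)
    -- definition of the martingale difference terms
    (hξ : ∀ k h, ξ k h
      = (∑ x' : S, P h (s k h) (a k h) x' * (Vk k (h + 1) x' - Vπ k (h + 1) x'))
        - (Vk k (h + 1) (s k (h + 1)) - Vπ k (h + 1) (s k (h + 1)))) :
    ∑ k ∈ Finset.range K, (Vstar 1 (s k 1) - Vπ k 1 (s k 1))
      ≤ ∑ k ∈ Finset.range K, ∑ h ∈ Finset.Icc 1 H,
          (2 * b k h (s k h) (a k h) + ξ k h) := by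
  apply Finset.sum_le_sum
  intro k _
  have key : ∀ m h, h + m = H + 1 →
      Vk k h (s k h) - Vπ k h (s k h)
        ≤ ∑ h' ∈ Finset.Icc h H, (2 * b k h' (s k h') (a k h') + ξ k h') := by
    intro m
    induction m with
    | zero =>
      intro h hh
      simp only [Nat.add_zero] at hh
      subst hh
      rw [(hterm k (s k (H+1))).1, (hterm k (s k (H+1))).2]
      rw [Finset.Icc_eq_empty (by omega)]
      simp
    | succ m ih =>
      intro h hh
      have hle : h ≤ H := by omega
      have ih' := ih (h+1) (by omega)
      have step : Vk k h (s k h) - Vπ k h (s k h)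
          ≤ 2 * b k h (s k h) (a k h) + ξ k h
            + (Vk k (h+1) (s k (h+1)) - Vπ k (h+1) (s k (h+1))) := by
        have h1 : Vk k h (s k h) = Qk k h (s k h) (a k h) := by
          rw [hVk, ha]
        have h2 : Vπ k h (s k h) = r h (s k h) (a k h)
            + ∑ x' : S, P h (s k h) (a k h) x' * Vπ k (h+1) x' := by
          rw [hVπ, ← ha, hBellπ]
        have hb := hbonus k h
        have hsum : (∑ x' : S, P h (s k h) (a k h) x' * Vk k (h+1) x')
            - (∑ x' : S, P h (s k h) (a k h) x' * Vπ k (h+1) x')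
            = ∑ x' : S, P h (s k h) (a k h) x' * (Vk k (h+1) x' - Vπ k (h+1) x') := by
          rw [← Finset.sum_sub_distrib]
          congr 1; ext x'; ring
        rw [hξ k h, h1, h2]
        linarith [hb, hsum]
      have hsplit : ∑ h' ∈ Finset.Icc h H, (2 * b k h' (s k h') (a k h') + ξ k h')
          = (2 * b k h (s k h) (a k h) + ξ k h)
            + ∑ h' ∈ Finset.Icc (h+1) H, (2 * b k h' (s k h') (a k h') + ξ k h') := by
        rw [Finset.Icc_eq_cons_Ioc hle, Finset.sum_cons, Finset.Icc_add_one_left_eq_Ioc]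
      rw [hsplit]
      linarith
  have hopt1 : Vstar 1 (s k 1) ≤ Vk k 1 (s k 1) := by
    rw [hVstar, hVk]
    exact le_trans (hopt k 1 (s k 1) (πstar 1 (s k 1))) (hgreedy k 1 (s k 1) _)
  have := key H 1 (by omega)
  linarith
end
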